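/- Let G be a group with subgroups K ≤ H ≤ G such that the index [G:H] is finite and the normal closure of K in G is contained in H. Then for any commutative ring F, the tower of group algebras F[G] ⊇ F[H] ⊇ F[K] is right depth three: there exist γ_i ∈ End_{F[H]}(F[G])_{F[K]} and u_i ∈ (F[G] ⊗_{F[H]} F[G])^{F[K]} with x ⊗ y = Σ_i x γ_i(y) u_i for all x, y ∈ F[G]. -/

import Mathlib

open scoped BigOperators

section BTCore

variable {R M N P : Type*} [AddCommGroup M] [AddCommGroup N] [AddCommGroup P]

/-- Relations defining the balanced tensor product of `M` and `N` over the
"scalars" `R`, where `R` acts on the right of `M` via `rho` and on the left of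
`N` via `lam`. -/
inductive BTRel (rho : R → M →+ M) (lam : R → N →+ N) :
    FreeAbelianGroup (M × N) → FreeAbelianGroup (M × N) → Prop
  | addl (m m' : M) (n : N) :
      BTRel rho lam (FreeAbelianGroup.of (m + m', n))
        (FreeAbelianGroup.of (m, n) + FreeAbelianGroup.of (m', n))
  | addr (m : M) (n n' : N) :
      BTRel rho lam (FreeAbelianGroup.of (m, n + n'))
        (FreeAbelianGroup.of (m, n) + FreeAbelianGroup.of (m, n'))
  | bal (r : R) (m : M) (n : N) :
      BTRel rho lam (FreeAbelianGroup.of (rho r m, n))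
        (FreeAbelianGroup.of (m, lam r n))

/-- The balanced tensor product `M ⊗_R N`. -/
def BT (rho : R → M →+ M) (lam : R → N →+ N) : Type _ :=
  (addConGen (BTRel rho lam)).Quotient

namespace BT

variable {rho : R → M →+ M} {lam : R → N →+ N}

instance : AddGroup (BT rho lam) :=
  inferInstanceAs (AddGroup (addConGen (BTRel rho lam)).Quotient)

instance : AddCommGroup (BT rho lam) :=
  { (inferInstance : AddGroup (BT rho lam)) with
    add_comm := fun a b => by
      refine AddCon.induction_on₂ a b fun x y => ?_
      change ((x + y : FreeAbelianGroup (M × N)) :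
        (addConGen (BTRel rho lam)).Quotient) = ((y + x : FreeAbelianGroup (M × N)) : _)
      rw [add_comm] }

/-- The canonical generator `m ⊗ n`. -/
def mk (rho : R → M →+ M) (lam : R → N →+ N) (m : M) (n : N) : BT rho lam :=
  ((FreeAbelianGroup.of (m, n) : FreeAbelianGroup (M × N)) :
    (addConGen (BTRel rho lam)).Quotient)

lemma mk_rel {x y : FreeAbelianGroup (M × N)} (h : BTRel rho lam x y) :
    (x : (addConGen (BTRel rho lam)).Quotient) = (y : _) :=
  (AddCon.eq _).2 (AddConGen.Rel.of _ _ h)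

lemma mk_add_left (m m' : M) (n : N) :
    mk rho lam (m + m') n = mk rho lam m n + mk rho lam m' n := by
  have := mk_rel (BTRel.addl m m' n (rho := rho) (lam := lam))
  exact this

lemma mk_add_right (m : M) (n n' : N) :
    mk rho lam m (n + n') = mk rho lam m n + mk rho lam m n' := by
  have := mk_rel (BTRel.addr m n n' (rho := rho) (lam := lam))
  exact this

lemma mk_bal (r : R) (m : M) (n : N) :
    mk rho lam (rho r m) n = mk rho lam m (lam r n) :=
  mk_rel (BTRel.bal r m n)

/-- Lift a biadditive balanced map to the balanced tensor product. -/
def lift (rho : R → M →+ M) (lam : R → N →+ N) (φ : M → N → P)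
    (h1 : ∀ m m' n, φ (m + m') n = φ m n + φ m' n)
    (h2 : ∀ m n n', φ m (n + n') = φ m n + φ m n')
    (h3 : ∀ r m n, φ (rho r m) n = φ m (lam r n)) : BT rho lam →+ P :=
  AddCon.lift _ (FreeAbelianGroup.lift fun p => φ p.1 p.2)
    ((AddCon.addConGen_le).2 (by
      rintro x y h
      cases h with
      | addl m m' n => simp [AddCon.ker_rel, FreeAbelianGroup.lift_apply_of, h1]
      | addr m n n' => simp [AddCon.ker_rel, FreeAbelianGroup.lift_apply_of, h2]
      | bal r m n => simp [AddCon.ker_rel, FreeAbelianGroup.lift_apply_of, h3]))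

@[simp] lemma lift_mk (φ : M → N → P) (h1 h2 h3) (m : M) (n : N) :
    lift rho lam φ h1 h2 h3 (mk rho lam m n) = φ m n := by
  show (addConGen (BTRel rho lam)).lift _ _ ((FreeAbelianGroup.of (m, n) :
    FreeAbelianGroup (M × N)) : (addConGen (BTRel rho lam)).Quotient) = _
  rw [AddCon.lift_coe, FreeAbelianGroup.lift_apply_of]

/-- Induction principle for the balanced tensor product. -/
protected lemma ind {motive : BT rho lam → Prop} (zero : motive 0)
    (mk' : ∀ m n, motive (mk rho lam m n)) (neg : ∀ x, motive x → motive (-x))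
    (add : ∀ x y, motive x → motive y → motive (x + y)) : ∀ x : BT rho lam, motive x := by
  intro x
  refine AddCon.induction_on x fun z => ?_
  induction z using FreeAbelianGroup.induction_on with
  | zero => exact zero
  | of p => exact mk' p.1 p.2
  | neg p h =>
      have : ((-FreeAbelianGroup.of p : FreeAbelianGroup (M × N)) :
          (addConGen (BTRel rho lam)).Quotient) = -(mk rho lam p.1 p.2) := rfl
      rw [this]; exact neg _ (mk' p.1 p.2)
  | add x y hx hy =>
      have : ((x + y : FreeAbelianGroup (M × N)) :
          (addConGen (BTRel rho lam)).Quotient) = (x : _) + (y : _) := rfl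
      rw [this]; exact add _ _ hx hy

lemma hom_ext {f g : BT rho lam →+ P}
    (h : ∀ m n, f (mk rho lam m n) = g (mk rho lam m n)) : f = g := by
  ext x
  refine BT.ind (motive := fun x => f x = g x) ?_ ?_ ?_ ?_ x
  · simp
  · exact h
  · intro y hy; simp [hy]
  · intro y z hy hz; simp [hy, hz]

end BT

end BTCore

section Tensor

variable {B A C P : Type*} [Ring B] [Ring A] [Ring C] [AddCommGroup P]

/-- The tensor product `A ⊗_B A` relative to a ring homomorphism `g : B →+* A`. -/
def Tsr (g : B →+* A) : Type _ :=
  BT (fun b => AddMonoidHom.mulRight (g b)) (fun b => AddMonoidHom.mulLeft (g b))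

instance (g : B →+* A) : AddCommGroup (Tsr g) := inferInstanceAs (AddCommGroup (BT _ _))

namespace Tsr

variable (g : B →+* A)

/-- The generator `x ⊗_B y` of `Tsr g`. -/
def tmk (x y : A) : Tsr g := BT.mk _ _ x y

lemma tmk_add_left (x x' y : A) : tmk g (x + x') y = tmk g x y + tmk g x' y :=
  BT.mk_add_left x x' y

lemma tmk_add_right (x y y' : A) : tmk g x (y + y') = tmk g x y + tmk g x y' :=
  BT.mk_add_right x y y'

lemma tmk_bal (x : A) (b : B) (y : A) : tmk g (x * g b) y = tmk g x (g b * y) :=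
  BT.mk_bal b x y

/-- Lift a biadditive `B`-balanced map `A × A → P` to `Tsr g`. -/
def tlift (φ : A → A → P)
    (h1 : ∀ x x' y, φ (x + x') y = φ x y + φ x' y)
    (h2 : ∀ x y y', φ x (y + y') = φ x y + φ x y')
    (h3 : ∀ x b y, φ (x * g b) y = φ x (g b * y)) : Tsr g →+ P :=
  BT.lift _ _ φ h1 h2 (fun r m n => h3 m r n)

@[simp] lemma tlift_mk (φ : A → A → P) (h1 h2 h3) (x y : A) :
    tlift g φ h1 h2 h3 (tmk g x y) = φ x y :=
  BT.lift_mk φ h1 h2 _ x y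

lemma thom_ext {g : B →+* A} {f f' : Tsr g →+ P}
    (h : ∀ x y, f (tmk g x y) = f' (tmk g x y)) : f = f' :=
  BT.hom_ext h

/-- Left multiplication by `a ∈ A` on the first tensorand. -/
def lmul (a : A) : Tsr g →+ Tsr g :=
  tlift g (fun x y => tmk g (a * x) y)
    (fun x x' y => by rw [mul_add, tmk_add_left])
    (fun x y y' => by rw [tmk_add_right])
    (fun x b y => by rw [← mul_assoc, tmk_bal])

@[simp] lemma lmul_mk (a x y : A) : lmul g a (tmk g x y) = tmk g (a * x) y :=
  tlift_mk g _ _ _ _ x y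

/-- Right multiplication by `a ∈ A` on the second tensorand. -/
def rmul (a : A) : Tsr g →+ Tsr g :=
  tlift g (fun x y => tmk g x (y * a))
    (fun x x' y => by rw [tmk_add_left])
    (fun x y y' => by rw [add_mul, tmk_add_right])
    (fun x b y => by rw [tmk_bal, mul_assoc])

@[simp] lemma rmul_mk (a x y : A) : rmul g a (tmk g x y) = tmk g x (y * a) :=
  tlift_mk g _ _ _ _ x y

lemma lmul_lmul (a a' : A) (p : Tsr g) : lmul g a (lmul g a' p) = lmul g (a * a') p := by
  have : ((lmul g a).comp (lmul g a')) = lmul g (a * a') :=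
    thom_ext fun x y => by simp [mul_assoc]
  exact DFunLike.congr_fun this p

lemma rmul_rmul (a a' : A) (p : Tsr g) : rmul g a (rmul g a' p) = rmul g (a' * a) p := by
  have : ((rmul g a).comp (rmul g a')) = rmul g (a' * a) :=
    thom_ext fun x y => by simp [mul_assoc]
  exact DFunLike.congr_fun this p

lemma lmul_rmul (a a' : A) (p : Tsr g) : lmul g a (rmul g a' p) = rmul g a' (lmul g a p) := by
  have : ((lmul g a).comp (rmul g a')) = (rmul g a').comp (lmul g a) :=
    thom_ext fun x y => by simp
  exact DFunLike.congr_fun this p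

lemma lmul_add_smul (a a' : A) (p : Tsr g) :
    lmul g (a + a') p = lmul g a p + lmul g a' p := by
  have : lmul g (a + a') = lmul g a + lmul g a' :=
    thom_ext fun x y => by simp [add_mul, tmk_add_left]
  rw [this]; rfl

lemma rmul_add_smul (a a' : A) (p : Tsr g) :
    rmul g (a + a') p = rmul g a p + rmul g a' p := by
  have : rmul g (a + a') = rmul g a + rmul g a' :=
    thom_ext fun x y => by simp [mul_add, tmk_add_right]
  rw [this]; rfl

/-- The multiplication map `μ : A ⊗_B A → A`. -/
def mulmap : Tsr g →+ A :=
  tlift g (fun x y => x * y) (fun x x' y => by rw [add_mul])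
    (fun x y y' => by rw [mul_add]) (fun x b y => by rw [mul_assoc])

@[simp] lemma mulmap_mk (x y : A) : mulmap g (tmk g x y) = x * y := tlift_mk g _ _ _ _ x y

end Tsr

section TowerDefs

open Tsr

variable (g : B →+* A) (hC : C →+* A)

/-- `p ∈ (A ⊗_B A)^C` : the `C`-centralizer condition, where `C` maps to `A` via `hC`. -/
def TCent (p : Tsr g) : Prop := ∀ c : C, lmul g (hC c) p = rmul g (hC c) p

/-- `α ∈ End_B A_C` : additive endomorphisms of `A` that are left `B`-linear
(via `g`) and right `C`-linear (via `hC`). -/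
def EndBAC (α : A →+ A) : Prop :=
  (∀ (b : B) (x : A), α (g b * x) = g b * α x) ∧
  ∀ (x : A) (c : C), α (x * hC c) = α x * hC c

/-- The tower is right depth three: `A ⊗_B A` is isomorphic, as `A`-`C`-bimodules,
to a direct summand of `A^n` for some `n`. Here the left `A`-action and right
`C`-action on `A^n` are componentwise, and on `Tsr g` they are `lmul` and `rmul`. -/
def IsRightD3 : Prop :=
  ∃ (n : ℕ) (π : (Fin n → A) →+ Tsr g) (σ : Tsr g →+ (Fin n → A)),
    (∀ (a : A) (v : Fin n → A), π (fun i => a * v i) = lmul g a (π v)) ∧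
    (∀ (c : C) (v : Fin n → A), π (fun i => v i * hC c) = rmul g (hC c) (π v)) ∧
    (∀ (a : A) (p : Tsr g) (i : Fin n), σ (lmul g a p) i = a * σ p i) ∧
    (∀ (c : C) (p : Tsr g) (i : Fin n), σ (rmul g (hC c) p) i = σ p i * hC c) ∧
    (∀ p : Tsr g, π (σ p) = p)

end TowerDefs

end Tensor

open Tsr



section Statement8Aux

variable {G : Type*} [Group G] {F : Type*} [CommRing F]

/-- `Finsupp.filter` with `MonoidAlgebra`-typed result. -/
abbrev maFilter (p : G → Prop) [DecidablePred p] (x : MonoidAlgebra F G) :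
    MonoidAlgebra F G := MonoidAlgebra.ofCoeff (Finsupp.filter p x.coeff)

lemma maFilter_zero' (p : G → Prop) [DecidablePred p] :
    maFilter (F := F) p (0 : MonoidAlgebra F G) = 0 := by
  simp [maFilter, Finsupp.filter_zero]

lemma maFilter_add' (p : G → Prop) [DecidablePred p] (x y : MonoidAlgebra F G) :
    maFilter p (x + y) = maFilter p x + maFilter p y := by
  simp only [maFilter, MonoidAlgebra.coeff_add, Finsupp.filter_add, MonoidAlgebra.ofCoeff_add]

lemma maFilter_single_pos (p : G → Prop) [DecidablePred p] (g : G) (d : F) (h : p g) :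
    maFilter p (MonoidAlgebra.single g d) = MonoidAlgebra.single g d := by
  simp only [maFilter, MonoidAlgebra.coeff_single, Finsupp.filter_single_of_pos _ h,
    MonoidAlgebra.ofCoeff_single]

lemma maFilter_single_neg (p : G → Prop) [DecidablePred p] (g : G) (d : F) (h : ¬ p g) :
    maFilter p (MonoidAlgebra.single g d) = 0 := by
  simp only [maFilter, MonoidAlgebra.coeff_single, Finsupp.filter_single_of_neg _ h,
    MonoidAlgebra.ofCoeff_zero]

lemma tmk_zero_left {B A : Type*} [Ring B] [Ring A] (g : B →+* A) (y : A) :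
    tmk g (0 : A) y = 0 := by
  have h := tmk_add_left g 0 0 y
  rw [add_zero] at h
  exact (add_eq_right.mp h.symm)

lemma lmul_zero {B A : Type*} [Ring B] [Ring A] (g : B →+* A) (q : Tsr g) :
    lmul g (0 : A) q = 0 := by
  have h := lmul_add_smul g (0 : A) 0 q
  rw [add_zero] at h
  exact (add_eq_right.mp h.symm)

lemma rmul_zero {B A : Type*} [Ring B] [Ring A] (g : B →+* A) (q : Tsr g) :
    rmul g (0 : A) q = 0 := by
  have h := rmul_add_smul g (0 : A) 0 q
  rw [add_zero] at h
  exact (add_eq_right.mp h.symm)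

lemma gB_apply (H : Subgroup G) (b : MonoidAlgebra F H) :
    MonoidAlgebra.mapDomainRingHom F H.subtype b = MonoidAlgebra.mapDomain H.subtype b := rfl

lemma gB_single (H : Subgroup G) (h : H) (c : F) :
    MonoidAlgebra.mapDomainRingHom F H.subtype (MonoidAlgebra.single h c)
      = MonoidAlgebra.single (↑h : G) c := by
  rw [gB_apply, MonoidAlgebra.mapDomain_single]; rfl

lemma ma_exists_mapDomain (H : Subgroup G) (z : MonoidAlgebra F G)
    (hz : ∀ g, z.coeff g ≠ 0 → g ∈ H) :
    ∃ b : MonoidAlgebra F H, MonoidAlgebra.mapDomainRingHom F H.subtype b = z := by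
  classical
  refine ⟨MonoidAlgebra.ofCoeff (Finsupp.subtypeDomain (· ∈ H) z.coeff), ?_⟩
  rw [gB_apply]
  apply MonoidAlgebra.coeff_injective
  ext g
  show Finsupp.mapDomain H.subtype (Finsupp.subtypeDomain (· ∈ H) z.coeff) g = z.coeff g
  by_cases hg : g ∈ H
  · have := Finsupp.mapDomain_apply (Subgroup.subtype_injective H)
      (Finsupp.subtypeDomain (· ∈ H) z.coeff) ⟨g, hg⟩
    simpa using this
  · rw [Finsupp.mapDomain_notin_range _ _ (by rintro ⟨⟨g', hg'⟩, rfl⟩; exact hg hg')]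
    symm
    by_contra h
    exact hg (hz g h)

lemma tmk_mul_subset (H : Subgroup G) (x z w : MonoidAlgebra F G)
    (hz : ∀ g, z.coeff g ≠ 0 → g ∈ H) :
    tmk (MonoidAlgebra.mapDomainRingHom F H.subtype) (x * z) w
      = tmk (MonoidAlgebra.mapDomainRingHom F H.subtype) x (z * w) := by
  obtain ⟨b, rfl⟩ := ma_exists_mapDomain H z hz
  exact tmk_bal _ x b w

lemma ma_filter_mul_left (H : Subgroup G) (p : G → Prop) [DecidablePred p]
    (hp : ∀ h ∈ H, ∀ g : G, p (h * g) ↔ p g)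
    (b : MonoidAlgebra F H) (x : MonoidAlgebra F G) :
    maFilter p (MonoidAlgebra.mapDomainRingHom F H.subtype b * x)
      = MonoidAlgebra.mapDomainRingHom F H.subtype b * maFilter p x := by
  induction b using MonoidAlgebra.induction_linear with
  | zero => simp [maFilter_zero']
  | add f g hf hg => rw [map_add, add_mul, maFilter_add', hf, hg, add_mul]
  | single h c =>
    induction x using MonoidAlgebra.induction_linear with
    | zero => simp [maFilter_zero']
    | add f g hf hg =>
      rw [mul_add, maFilter_add', hf, hg, maFilter_add', mul_add]
    | single g d =>
      rw [gB_single, MonoidAlgebra.single_mul_single]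
      by_cases hg : p g
      · rw [maFilter_single_pos _ _ _ ((hp (↑h) h.2 g).mpr hg),
          maFilter_single_pos _ _ _ hg, MonoidAlgebra.single_mul_single]
      · rw [maFilter_single_neg _ _ _ (fun hc => hg ((hp (↑h) h.2 g).mp hc)),
          maFilter_single_neg _ _ _ hg, mul_zero]

lemma hC_single (H K : Subgroup G) (hKH : K ≤ H) (k : K) (d : F) :
    ((MonoidAlgebra.mapDomainRingHom F H.subtype).comp
        (MonoidAlgebra.mapDomainRingHom F (Subgroup.inclusion hKH)))
      (MonoidAlgebra.single k d) = MonoidAlgebra.single (k : G) d := by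
  show MonoidAlgebra.mapDomain (⇑H.subtype)
      (MonoidAlgebra.mapDomain (⇑(Subgroup.inclusion hKH)) (MonoidAlgebra.single k d)) = _
  rw [MonoidAlgebra.mapDomain_single, MonoidAlgebra.mapDomain_single]
  rfl

lemma ma_filter_mul_right (H K : Subgroup G) (hKH : K ≤ H) (p : G → Prop) [DecidablePred p]
    (hp : ∀ k ∈ K, ∀ g : G, p (g * k) ↔ p g)
    (x : MonoidAlgebra F G) (c : MonoidAlgebra F K) :
    maFilter p (x * ((MonoidAlgebra.mapDomainRingHom F H.subtype).comp
        (MonoidAlgebra.mapDomainRingHom F (Subgroup.inclusion hKH))) c)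
      = maFilter p x * ((MonoidAlgebra.mapDomainRingHom F H.subtype).comp
        (MonoidAlgebra.mapDomainRingHom F (Subgroup.inclusion hKH))) c := by
  induction c using MonoidAlgebra.induction_linear with
  | zero => simp [maFilter_zero']
  | add f g hf hg => rw [map_add, mul_add, maFilter_add', hf, hg, mul_add]
  | single k d =>
    rw [hC_single H K hKH]
    induction x using MonoidAlgebra.induction_linear with
    | zero => simp [maFilter_zero']
    | add f g hf hg =>
      rw [add_mul, maFilter_add', hf, hg, maFilter_add', add_mul]
    | single g d' =>
      rw [MonoidAlgebra.single_mul_single]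
      by_cases hg : p g
      · rw [maFilter_single_pos _ _ _ ((hp (↑k) k.2 g).mpr hg),
          maFilter_single_pos _ _ _ hg, MonoidAlgebra.single_mul_single]
      · rw [maFilter_single_neg _ _ _ (fun hc => hg ((hp (↑k) k.2 g).mp hc)),
          maFilter_single_neg _ _ _ hg, zero_mul]

lemma rightRel_mk_mul_left (H : Subgroup G) {h : G} (hh : h ∈ H) (g : G) :
    Quotient.mk (QuotientGroup.rightRel H) (h * g) = Quotient.mk (QuotientGroup.rightRel H) g := by
  apply Quotient.sound
  have e0 : g * (h * g)⁻¹ = h⁻¹ := by group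
  exact QuotientGroup.rightRel_apply.mpr (by rw [e0]; exact H.inv_mem hh)

lemma rightRel_mk_mul_right (H : Subgroup G) {g k : G} (hk : g * k * g⁻¹ ∈ H) :
    Quotient.mk (QuotientGroup.rightRel H) (g * k) = Quotient.mk (QuotientGroup.rightRel H) g := by
  apply Quotient.sound
  have e0 : g * (g * k)⁻¹ = (g * k * g⁻¹)⁻¹ := by group
  exact QuotientGroup.rightRel_apply.mpr (by rw [e0]; exact H.inv_mem hk)

end Statement8Aux

/-- Let `K ≤ H ≤ G` with `[G : H]` finite and the normal closure of
`K` in `G` contained in `H`.  Then for any commutative base ring `F` the tower of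
group algebras `F[G] ⊇ F[H] ⊇ F[K]` is right depth three: it admits right depth
three quasibases `γ_i ∈ End_{F[H]} F[G]_{F[K]}` and `u_i ∈ (F[G] ⊗_{F[H]} F[G])^{F[K]}`. -/
theorem groupAlgebra_tower_isRightD3 {G : Type*} [Group G] (H K : Subgroup G)
    (hKH : K ≤ H) (hfin : H.FiniteIndex)
    (hnc : Subgroup.normalClosure (K : Set G) ≤ H)
    (F : Type*) [CommRing F] :
    ∃ (n : ℕ)
      (γ : Fin n → (MonoidAlgebra F G →+ MonoidAlgebra F G))
      (u : Fin n → Tsr (MonoidAlgebra.mapDomainRingHom F H.subtype)),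
      (∀ i, EndBAC (MonoidAlgebra.mapDomainRingHom F H.subtype)
          ((MonoidAlgebra.mapDomainRingHom F H.subtype).comp
            (MonoidAlgebra.mapDomainRingHom F (Subgroup.inclusion hKH))) (γ i)) ∧
      (∀ i, TCent (MonoidAlgebra.mapDomainRingHom F H.subtype)
          ((MonoidAlgebra.mapDomainRingHom F H.subtype).comp
            (MonoidAlgebra.mapDomainRingHom F (Subgroup.inclusion hKH))) (u i)) ∧
      ∀ x y : MonoidAlgebra F G,
        tmk (MonoidAlgebra.mapDomainRingHom F H.subtype) x y =
          ∑ i, lmul (MonoidAlgebra.mapDomainRingHom F H.subtype) (x * γ i y) (u i) := by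
  classical
  haveI := hfin
  haveI : Finite (Quotient (QuotientGroup.rightRel H)) :=
    Finite.of_equiv _ (QuotientGroup.quotientRightRelEquivQuotientLeftRel H).symm
  haveI : Fintype (Quotient (QuotientGroup.rightRel H)) := Fintype.ofFinite _
  set gB := MonoidAlgebra.mapDomainRingHom F H.subtype with hgB
  set Q := Quotient (QuotientGroup.rightRel H) with hQ
  set n := Fintype.card Q with hn
  set e : Fin n ≃ Q := (Fintype.equivFin Q).symm with he
  set r : Fin n → G := fun i => (e i).out with hrdef
  have hr : ∀ i, Quotient.mk (QuotientGroup.rightRel H) (r i) = e i := fun i => Quotient.out_eq _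
  set p : Fin n → G → Prop :=
    fun i g => Quotient.mk (QuotientGroup.rightRel H) g = e i with hpdef
  have hconj : ∀ (g : G) (k : G), k ∈ K → g * k * g⁻¹ ∈ H := by
    intro g k hk
    exact hnc (Subgroup.normalClosure_normal.conj_mem k (Subgroup.subset_normalClosure hk) g)
  have hpleft : ∀ (i : Fin n), ∀ h ∈ H, ∀ g : G, p i (h * g) ↔ p i g := by
    intro i h hh g
    show Quotient.mk _ (h * g) = e i ↔ Quotient.mk _ g = e i
    rw [rightRel_mk_mul_left H hh g]
  have hpright : ∀ (i : Fin n), ∀ k ∈ K, ∀ g : G, p i (g * k) ↔ p i g := by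
    intro i k hk g
    show Quotient.mk _ (g * k) = e i ↔ Quotient.mk _ g = e i
    rw [rightRel_mk_mul_right H (hconj g k hk)]
  refine ⟨n, fun i => AddMonoidHom.mk' (maFilter (p i)) (maFilter_add' (p i)),
    fun i => tmk gB (MonoidAlgebra.single (r i)⁻¹ (1 : F)) (MonoidAlgebra.single (r i) (1 : F)),
    ?_, ?_, ?_⟩
  · -- γ i ∈ End_B A_C
    intro i
    constructor
    · intro b x
      exact ma_filter_mul_left H (p i) (hpleft i) b x
    · intro x c
      exact ma_filter_mul_right H K hKH (p i) (hpright i) x c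
  · -- u i is C-central
    intro i c
    induction c using MonoidAlgebra.induction_linear with
    | zero => rw [map_zero, lmul_zero, rmul_zero]
    | add f g hf hg => rw [map_add, lmul_add_smul, rmul_add_smul, hf, hg]
    | single k d =>
      rw [hC_single H K hKH]
      have hh : r i * ↑k * (r i)⁻¹ ∈ H := hconj (r i) ↑k k.2
      rw [lmul_mk, rmul_mk, MonoidAlgebra.single_mul_single, MonoidAlgebra.single_mul_single,
        one_mul, mul_one]
      have e1 : ((k : G) * (r i)⁻¹) = (r i)⁻¹ * (r i * ↑k * (r i)⁻¹) := by group
      have e2 : MonoidAlgebra.single ((k : G) * (r i)⁻¹) d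
          = MonoidAlgebra.single ((r i)⁻¹) (1 : F)
              * gB (MonoidAlgebra.single (⟨r i * ↑k * (r i)⁻¹, hh⟩ : H) d) := by
        rw [hgB, gB_single, MonoidAlgebra.single_mul_single, one_mul, e1]
      rw [e2, tmk_bal, hgB, gB_single, MonoidAlgebra.single_mul_single]
      congr 2
      · show r i * ↑k * (r i)⁻¹ * r i = r i * ↑k
        group
      · exact mul_one d
  · -- the quasibase identity
    intro x y
    let tol : MonoidAlgebra F G →+ Tsr gB := AddMonoidHom.mk' (tmk gB x) (tmk_add_right gB x)
    have hpart : ∑ i, maFilter (p i) y = y := by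
      ext g
      rw [MonoidAlgebra.coeff_sum, Finsupp.finset_sum_apply]
      have hcond : ∀ i : Fin n, (maFilter (p i) y).coeff g
          = if e.symm (Quotient.mk (QuotientGroup.rightRel H) g) = i then y.coeff g else 0 := by
        intro i
        rw [maFilter, MonoidAlgebra.coeff_ofCoeff, Finsupp.filter_apply]
        congr 1
        exact propext (Equiv.symm_apply_eq e).symm
      simp_rw [hcond]
      simp
    have key : ∀ i : Fin n,
        lmul gB (x * maFilter (p i) y)
          (tmk gB (MonoidAlgebra.single (r i)⁻¹ (1 : F)) (MonoidAlgebra.single (r i) (1 : F)))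
          = tmk gB x (maFilter (p i) y) := by
      intro i
      set f : MonoidAlgebra F G := maFilter (p i) y with hf
      have hsupp : ∀ s : G, (f * MonoidAlgebra.single (r i)⁻¹ (1 : F)).coeff s ≠ 0 → s ∈ H := by
        intro s hs
        rw [MonoidAlgebra.coeff_mul_single_apply, inv_inv, mul_one] at hs
        have hps : p i (s * r i) := by
          by_contra hcon
          rw [hf, maFilter, MonoidAlgebra.coeff_ofCoeff, Finsupp.filter_apply, if_neg hcon] at hs
          exact hs rfl
        have hq : Quotient.mk (QuotientGroup.rightRel H) (s * r i)
            = Quotient.mk (QuotientGroup.rightRel H) (r i) := by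
          rw [hr i]; exact hps
        have h2 := QuotientGroup.rightRel_apply.mp (Quotient.exact hq)
        have h3 : r i * (s * r i)⁻¹ = s⁻¹ := by group
        rw [h3] at h2
        simpa using H.inv_mem h2
      rw [lmul_mk, mul_assoc, tmk_mul_subset H x _ _ hsupp, mul_assoc,
        MonoidAlgebra.single_mul_single, inv_mul_cancel, one_mul,
        ← MonoidAlgebra.one_def, mul_one]
    calc tmk gB x y = tol y := rfl
      _ = tol (∑ i, maFilter (p i) y) := by rw [hpart]
      _ = ∑ i, tol (maFilter (p i) y) := map_sum tol _ _
      _ = ∑ i, lmul gB (x * maFilter (p i) y)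
            (tmk gB (MonoidAlgebra.single (r i)⁻¹ (1 : F)) (MonoidAlgebra.single (r i) (1 : F)))
            := by
          refine Finset.sum_congr rfl fun i _ => ?_
          rw [key i]
          rfl
      _ = _ := rfl
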